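/- Let M and N be locally compact, second-countable, Hausdorff topological abelian groups, let φ : M → N be a continuous group homomorphism with finite kernel and open image, and let ν be a Haar measure on N. Then there exists a Haar measure ν′ on M such that ν′(Z) = ν(φ(Z)) for every Borel subset Z ⊆ M on which φ is injective. -/

import Mathlib

open MeasureTheory

/-- Let `M`, `N` be locally compact, second-countable, Hausdorff topological abelian
groups, `φ : M →+ N` a continuous homomorphism with finite kernel and open image, and
`ν` a Haar measure on `N`.  Then there is a Haar measure `ν'` on `M` (the "induced
measure") such that `ν' Z = ν (φ '' Z)` for every Borel set `Z ⊆ M` on which `φ` is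
injective. -/
theorem exists_induced_addHaarMeasure
    {M N : Type*}
    [TopologicalSpace M] [AddCommGroup M] [IsTopologicalAddGroup M]
    [LocallyCompactSpace M] [SecondCountableTopology M] [T2Space M]
    [MeasurableSpace M] [BorelSpace M]
    [TopologicalSpace N] [AddCommGroup N] [IsTopologicalAddGroup N]
    [LocallyCompactSpace N] [SecondCountableTopology N] [T2Space N]
    [MeasurableSpace N] [BorelSpace N]
    (φ : M →+ N) (hcont : Continuous φ) (hker : Finite φ.ker)
    (hopen : IsOpen (Set.range φ))
    (ν : Measure N) [ν.IsAddHaarMeasure] :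
    ∃ ν' : Measure M, ν'.IsAddHaarMeasure ∧
      ∀ Z : Set M, MeasurableSet Z → Set.InjOn φ Z → ν' Z = ν (φ '' Z) := by
  classical
  -- `φ` is an open map, by the open mapping theorem applied to the corestriction
  -- onto its (open) range.
  have hmapopen : IsOpenMap φ := by
    have hr : IsOpen (φ.range : Set N) := by rwa [AddMonoidHom.coe_range]
    haveI : LocallyCompactSpace φ.range := hr.locallyCompactSpace
    have h1 : IsOpenMap φ.rangeRestrict :=
      AddMonoidHom.isOpenMap_of_sigmaCompact φ.rangeRestrict φ.rangeRestrict_surjective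
        (Continuous.subtype_mk hcont _)
    have h2 : IsOpenMap ((↑) : φ.range → N) := hr.isOpenMap_subtype_val
    have h3 : ⇑φ = ((↑) : φ.range → N) ∘ ⇑φ.rangeRestrict := rfl
    rw [h3]
    exact h2.comp h1
  -- a small open neighborhood `U` of `0` such that differences of elements of `U`
  -- meet the kernel only at `0`.
  have hSfin : ((φ.ker : Set M) \ {0}).Finite := (Set.toFinite (φ.ker : Set M)).diff
  have hScl : IsClosed ((φ.ker : Set M) \ {0}) := hSfin.isClosed
  have hc0 : ((φ.ker : Set M) \ {0})ᶜ ∈ nhds (0 : M) := by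
    refine hScl.isOpen_compl.mem_nhds ?_
    simp
  obtain ⟨U0, hU0mem, hU0⟩ := exists_nhds_half_neg hc0
  set U : Set M := interior U0 with hUdef
  have hUopen : IsOpen U := isOpen_interior
  have hU0sub : U ⊆ U0 := interior_subset
  have hU0' : (0 : M) ∈ U := mem_interior_iff_mem_nhds.2 hU0mem
  -- the basic translates on which `φ` is injective
  set Wp : M → Set M := fun z => (fun y => y - z) ⁻¹' U with hWpdef
  have hWpopen : ∀ z, IsOpen (Wp z) := fun z => hUopen.preimage (continuous_sub_right z)
  have hWpmem : ∀ z, z ∈ Wp z := by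
    intro z
    simp only [hWpdef, Set.mem_preimage, sub_self]
    exact hU0'
  have hWpinj : ∀ z, Set.InjOn φ (Wp z) := by
    intro z a ha b hb hab
    have h1 : (a - z) - (b - z) ∈ ((φ.ker : Set M) \ {0})ᶜ :=
      hU0 _ (hU0sub ha) _ (hU0sub hb)
    have h2 : a - b ∈ (φ.ker : Set M) := by
      simp only [SetLike.mem_coe, AddMonoidHom.mem_ker, map_sub, hab, sub_self]
    have h3 : (a - z) - (b - z) = a - b := by abel
    rw [h3] at h1
    have h4 : a - b = 0 := by
      by_contra h
      exact h1 ⟨h2, h⟩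
    exact sub_eq_zero.1 h4
  have hWptrans : ∀ x z : M, (fun y => x + y) '' Wp z = Wp (x + z) := by
    intro x z
    ext y
    simp only [hWpdef, Set.mem_image, Set.mem_preimage]
    constructor
    · rintro ⟨w, hw, rfl⟩
      have h : x + w - (x + z) = w - z := by abel
      rwa [h]
    · intro hy
      refine ⟨y - x, ?_, by abel⟩
      have h : y - x - z = y - (x + z) := by abel
      rwa [h]
  -- a countable cover of `M` by such translates
  obtain ⟨t, htc, htU⟩ := TopologicalSpace.countable_cover_nhds
    (f := fun x => Wp x) (fun x => (hWpopen x).mem_nhds (hWpmem x))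
  have htne : t.Nonempty := by
    have h0 : (0 : M) ∈ ⋃ x ∈ t, Wp x := htU ▸ Set.mem_univ 0
    rcases Set.mem_iUnion₂.1 h0 with ⟨x, hx, -⟩
    exact ⟨x, hx⟩
  obtain ⟨c, hc⟩ := Set.Countable.exists_eq_range htc htne
  set W : ℕ → Set M := fun n => Wp (c n) with hWdef
  have hWopen : ∀ n, IsOpen (W n) := fun n => hWpopen _
  have hWuniv : (⋃ n, W n) = Set.univ := by
    apply Set.eq_univ_of_univ_subset
    rw [← htU, hc]
    rintro y hy
    rcases Set.mem_iUnion₂.1 hy with ⟨x, hx, hyx⟩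
    rcases Set.mem_range.1 hx with ⟨n, rfl⟩
    exact Set.mem_iUnion.2 ⟨n, hyx⟩
  -- disjointify the cover
  set V : ℕ → Set M := fun n => W n \ ⋃ (m : ℕ) (_ : m < n), W m with hVdef
  have hVsub : ∀ n, V n ⊆ W n := fun n => Set.diff_subset
  have hVmeas : ∀ n, MeasurableSet (V n) :=
    fun n => ((hWopen n).measurableSet).diff
      (MeasurableSet.iUnion fun m => MeasurableSet.iUnion fun _ => (hWopen m).measurableSet)
  have hVdisj : Pairwise (Function.onFun Disjoint V) := by
    intro m n hmn
    rcases lt_or_gt_of_ne hmn with h | h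
    · refine Set.disjoint_left.2 fun x hxm hxn => ?_
      exact hxn.2 (Set.mem_iUnion.2 ⟨m, Set.mem_iUnion.2 ⟨h, hxm.1⟩⟩)
    · refine Set.disjoint_left.2 fun x hxm hxn => ?_
      exact hxm.2 (Set.mem_iUnion.2 ⟨n, Set.mem_iUnion.2 ⟨h, hxn.1⟩⟩)
  have hVuniv : (⋃ n, V n) = Set.univ := by
    apply Set.eq_univ_of_forall
    intro x
    have hx : ∃ n, x ∈ W n := Set.mem_iUnion.1 (hWuniv.symm ▸ Set.mem_univ x)
    refine Set.mem_iUnion.2 ⟨Nat.find hx, Nat.find_spec hx, fun hmem => ?_⟩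
    rcases Set.mem_iUnion.1 hmem with ⟨m, hm⟩
    rcases Set.mem_iUnion.1 hm with ⟨hmlt, hxm⟩
    exact Nat.find_min hx hmlt hxm
  -- measurability of images of measurable subsets of a translate `Wp z`
  have himg : ∀ (z : M) (s : Set M), s ⊆ Wp z → MeasurableSet s → MeasurableSet (φ '' s) := by
    intro z s hsub hs
    have hinj : Function.Injective (fun x : Wp z => φ x) := by
      rintro ⟨a, ha⟩ ⟨b, hb⟩ hab
      exact Subtype.ext (hWpinj z ha hb hab)
    have hoe : Topology.IsOpenEmbedding (fun x : Wp z => φ x) :=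
      Topology.IsOpenEmbedding.of_continuous_injective_isOpenMap
        (hcont.comp continuous_subtype_val) hinj (hmapopen.restrict (hWpopen z))
    have hme : MeasurableEmbedding (fun x : Wp z => φ x) := hoe.measurableEmbedding
    have himage : φ '' s = (fun x : Wp z => φ x) '' (((↑) : Wp z → M) ⁻¹' s) := by
      have h1 : (fun x : Wp z => φ x) '' (((↑) : Wp z → M) ⁻¹' s)
          = φ '' (((↑) : Wp z → M) '' (((↑) : Wp z → M) ⁻¹' s)) := by
        exact Set.image_comp _ _ _
      rw [h1, Subtype.image_preimage_coe, Set.inter_eq_self_of_subset_right hsub]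
    rw [himage]
    exact hme.measurableSet_image' (measurable_subtype_coe hs)
  -- additivity of `ν ∘ (φ '' ·)` on families with injectivity on the union
  have hadd : ∀ T : ℕ → Set M, (∀ i, MeasurableSet (φ '' T i)) →
      Pairwise (Function.onFun Disjoint T) → Set.InjOn φ (⋃ i, T i) →
      ν (φ '' ⋃ i, T i) = ∑' i, ν (φ '' T i) := by
    intro T hTm hTd hTinj
    rw [Set.image_iUnion]
    refine measure_iUnion ?_ hTm
    intro i j hij
    refine Set.disjoint_left.2 ?_
    rintro y ⟨a, ha, rfl⟩ ⟨b, hb, hba⟩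
    have hab : b = a := hTinj (Set.mem_iUnion.2 ⟨j, hb⟩) (Set.mem_iUnion.2 ⟨i, ha⟩) hba
    exact Set.disjoint_left.1 (hTd hij) ha (hab ▸ hb)
  -- the component measures
  set μc : ℕ → Measure M := fun n => Measure.ofMeasurable
    (fun s _ => ν (φ '' (s ∩ V n)))
    (by simp)
    (by
      intro f hf hd
      show ν (φ '' ((⋃ i, f i) ∩ V n)) = ∑' i, ν (φ '' (f i ∩ V n))
      have h1 : (⋃ i, f i) ∩ V n = ⋃ i, (f i ∩ V n) := by rw [Set.iUnion_inter]
      rw [h1]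
      exact hadd (fun i => f i ∩ V n)
        (fun i => himg (c n) _ (Set.inter_subset_right.trans (hVsub n))
          ((hf i).inter (hVmeas n)))
        (fun i j hij => (hd hij).mono Set.inter_subset_left Set.inter_subset_left)
        ((hWpinj (c n)).mono
          ((Set.iUnion_subset fun i => Set.inter_subset_right).trans (hVsub n)))) with hμcdef
  have hval : ∀ s : Set M, MeasurableSet s →
      Measure.sum μc s = ∑' n, ν (φ '' (s ∩ V n)) := by
    intro s hs
    rw [Measure.sum_apply _ hs]
    exact tsum_congr fun n => Measure.ofMeasurable_apply s hs
  -- the key formula on sets where `φ` is injective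
  have hmain : ∀ Z : Set M, MeasurableSet Z → Set.InjOn φ Z →
      Measure.sum μc Z = ν (φ '' Z) := by
    intro Z hZ hZinj
    rw [hval Z hZ]
    have h1 : (⋃ n, Z ∩ V n) = Z := by rw [← Set.inter_iUnion, hVuniv, Set.inter_univ]
    have h2 := hadd (fun n => Z ∩ V n)
      (fun n => himg (c n) _ (Set.inter_subset_right.trans (hVsub n))
        (hZ.inter (hVmeas n)))
      (fun i j hij => (hVdisj hij).mono Set.inter_subset_right Set.inter_subset_right)
      (hZinj.mono (by rw [h1]))
    rw [h1] at h2
    exact h2.symm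
  -- independence of the decomposition: any other suitable partition gives the same sum
  have hindep : ∀ (A : ℕ → Set M) (z : ℕ → M), (∀ n, A n ⊆ Wp (z n)) →
      (∀ n, MeasurableSet (A n)) → Pairwise (Function.onFun Disjoint A) →
      (⋃ n, A n) = Set.univ → ∀ s : Set M, MeasurableSet s →
      ∑' n, ν (φ '' (s ∩ V n)) = ∑' n, ν (φ '' (s ∩ A n)) := by
    intro A z hAsub hAmeas hAdisj hAuniv s hs
    have hL : ∀ n, ν (φ '' (s ∩ V n)) = ∑' m, ν (φ '' (s ∩ V n ∩ A m)) := by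
      intro n
      have h1 : (⋃ m, s ∩ V n ∩ A m) = s ∩ V n := by
        rw [← Set.inter_iUnion, hAuniv, Set.inter_univ]
      have h2 := hadd (fun m => s ∩ V n ∩ A m)
        (fun m => himg (c n) _
          ((Set.inter_subset_left.trans Set.inter_subset_right).trans (hVsub n))
          (((hs.inter (hVmeas n)).inter (hAmeas m))))
        (fun i j hij => (hAdisj hij).mono Set.inter_subset_right Set.inter_subset_right)
        ((hWpinj (c n)).mono
          ((Set.iUnion_subset fun m =>
            Set.inter_subset_left.trans Set.inter_subset_right).trans (hVsub n)))
      calc ν (φ '' (s ∩ V n)) = ν (φ '' ⋃ m, s ∩ V n ∩ A m) := by rw [h1]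
        _ = ∑' m, ν (φ '' (s ∩ V n ∩ A m)) := h2
    have hR : ∀ m, ν (φ '' (s ∩ A m)) = ∑' n, ν (φ '' (s ∩ A m ∩ V n)) := by
      intro m
      have h1 : (⋃ n, s ∩ A m ∩ V n) = s ∩ A m := by
        rw [← Set.inter_iUnion, hVuniv, Set.inter_univ]
      have h2 := hadd (fun n => s ∩ A m ∩ V n)
        (fun n => himg (z m) _
          ((Set.inter_subset_left.trans Set.inter_subset_right).trans (hAsub m))
          (((hs.inter (hAmeas m)).inter (hVmeas n))))
        (fun i j hij => (hVdisj hij).mono Set.inter_subset_right Set.inter_subset_right)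
        ((hWpinj (z m)).mono
          ((Set.iUnion_subset fun n =>
            Set.inter_subset_left.trans Set.inter_subset_right).trans (hAsub m)))
      calc ν (φ '' (s ∩ A m)) = ν (φ '' ⋃ n, s ∩ A m ∩ V n) := by rw [h1]
        _ = ∑' n, ν (φ '' (s ∩ A m ∩ V n)) := h2
    calc ∑' n, ν (φ '' (s ∩ V n)) = ∑' n, ∑' m, ν (φ '' (s ∩ V n ∩ A m)) := tsum_congr hL
      _ = ∑' m, ∑' n, ν (φ '' (s ∩ V n ∩ A m)) := ENNReal.tsum_comm
      _ = ∑' m, ∑' n, ν (φ '' (s ∩ A m ∩ V n)) := by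
          refine tsum_congr fun m => tsum_congr fun n => ?_
          rw [Set.inter_right_comm]
      _ = ∑' m, ν (φ '' (s ∩ A m)) := (tsum_congr hR).symm
  -- translation invariance
  have hinv : ∀ (x : M) (s : Set M), MeasurableSet s →
      Measure.sum μc ((fun y => x + y) ⁻¹' s) = Measure.sum μc s := by
    intro x s hs
    have hpre : MeasurableSet ((fun y => x + y) ⁻¹' s) := hs.preimage (measurable_const_add x)
    rw [hval _ hpre, hval _ hs]
    have hterm : ∀ n, ν (φ '' ((fun y => x + y) ⁻¹' s ∩ V n))
        = ν (φ '' (s ∩ (fun y => x + y) '' V n)) := by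
      intro n
      have hset : φ '' ((fun y => x + y) ⁻¹' s ∩ V n)
          = (fun u => φ x + u) ⁻¹' (φ '' (s ∩ (fun y => x + y) '' V n)) := by
        ext u
        simp only [Set.mem_image, Set.mem_preimage, Set.mem_inter_iff]
        constructor
        · rintro ⟨w, ⟨hws, hwV⟩, rfl⟩
          exact ⟨x + w, ⟨hws, ⟨w, hwV, rfl⟩⟩, map_add φ x w⟩
        · rintro ⟨v, ⟨hvs, ⟨w, hwV, rfl⟩⟩, hv⟩
          refine ⟨w, ⟨hvs, hwV⟩, ?_⟩
          rw [map_add] at hv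
          exact add_left_cancel hv
      rw [hset, measure_preimage_add]
    rw [tsum_congr hterm]
    refine (hindep (fun n => (fun y => x + y) '' V n) (fun n => x + c n) ?_ ?_ ?_ ?_ s hs).symm
    · intro n
      have h2 : (fun y => x + y) '' W n = Wp (x + c n) := hWptrans x (c n)
      exact (Set.image_mono (hVsub n)).trans (le_of_eq h2)
    · intro n
      show MeasurableSet ((fun y => x + y) '' V n)
      have h1 : (fun y => x + y) '' V n = (fun y => -x + y) ⁻¹' V n := by
        ext y
        simp only [Set.mem_image, Set.mem_preimage]
        constructor
        · rintro ⟨b, hb, rfl⟩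
          rwa [neg_add_cancel_left]
        · intro hy
          exact ⟨-x + y, hy, by rw [add_neg_cancel_left]⟩
      rw [h1]
      exact (hVmeas n).preimage (measurable_const_add (-x))
    · intro i j hij
      exact (Set.disjoint_image_iff (add_right_injective x)).2 (hVdisj hij)
    · rw [← Set.image_iUnion, hVuniv, Set.image_univ]
      exact Set.range_eq_univ.2 fun y => ⟨y - x, by abel⟩
  -- the three Haar measure properties
  have hinvinst : (Measure.sum μc).IsAddLeftInvariant := by
    constructor
    intro x
    refine Measure.ext fun s hs => ?_
    rw [Measure.map_apply (measurable_const_add x) hs]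
    exact hinv x s hs
  have hfininst : IsFiniteMeasureOnCompacts (Measure.sum μc) := by
    constructor
    intro K hK
    rw [hval K hK.measurableSet]
    obtain ⟨t0, ht0⟩ := hK.elim_finite_subcover W hWopen
      (by rw [hWuniv]; exact Set.subset_univ K)
    set Nb := (t0.sup id) + 1 with hNb
    have hzero : ∀ n, Nb ≤ n → K ∩ V n = ∅ := by
      intro n hn
      ext x
      simp only [Set.mem_inter_iff, Set.mem_empty_iff_false, iff_false, not_and]
      intro hxK hxV
      rcases Set.mem_iUnion₂.1 (ht0 hxK) with ⟨m, hm, hxm⟩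
      have hmlt : m < n :=
        lt_of_lt_of_le (Nat.lt_succ_of_le (Finset.le_sup (f := id) hm)) hn
      exact hxV.2 (Set.mem_iUnion.2 ⟨m, Set.mem_iUnion.2 ⟨hmlt, hxm⟩⟩)
    have hsum : ∑' n, ν (φ '' (K ∩ V n)) = ∑ n ∈ Finset.range Nb, ν (φ '' (K ∩ V n)) := by
      refine tsum_eq_sum ?_
      intro n hn
      rw [hzero n (Nat.le_of_not_lt (by simpa using hn))]
      simp
    rw [hsum]
    have hKc : IsCompact (φ '' K) := hK.image hcont
    refine ENNReal.sum_lt_top.2 fun n _ => ?_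
    exact lt_of_le_of_lt (measure_mono (Set.image_mono Set.inter_subset_left))
      hKc.measure_lt_top
  have hposinst : Measure.IsOpenPosMeasure (Measure.sum μc) := by
    constructor
    intro G hG hGne
    obtain ⟨g, hg⟩ := hGne
    have hOopen : IsOpen (G ∩ Wp g) := hG.inter (hWpopen g)
    have hgO : g ∈ G ∩ Wp g := ⟨hg, hWpmem g⟩
    have h1 : Measure.sum μc (G ∩ Wp g) = ν (φ '' (G ∩ Wp g)) :=
      hmain _ hOopen.measurableSet ((hWpinj g).mono Set.inter_subset_right)
    have h2 : ν (φ '' (G ∩ Wp g)) ≠ 0 :=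
      (hmapopen _ hOopen).measure_ne_zero ν ⟨φ g, Set.mem_image_of_mem _ hgO⟩
    intro h0
    refine h2 ?_
    rw [← h1]
    exact le_antisymm (le_trans (measure_mono Set.inter_subset_left) (le_of_eq h0)) zero_le
  exact ⟨Measure.sum μc,
    { toIsFiniteMeasureOnCompacts := hfininst
      toIsAddLeftInvariant := hinvinst
      toIsOpenPosMeasure := hposinst }, hmain⟩
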